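/- arXiv:1811.09434 — 5 statements merged into one kernel-verified Lean document; each statement's English description precedes it below -/
import Mathlib

section
/- Let F be a free group of finite rank n and A = F/[F,F] its abelianization. For each k ≥ 1, there is a surjective homomorphism from the k-fold tensor product A ⊗ A ⊗ ... ⊗ A (over ℤ) onto the lower central quotient γ_k(F)/γ_{k+1}(F), sending x̄_1 ⊗ ... ⊗ x̄_k to the class of the left-normalized commutator [x_1, x_2, ..., x_k]. -/
open scoped TensorProduct
open scoped commutatorElement

/-- The left-normalized commutator `[x 0, x 1, ..., x k]`. -/
def leftNormalizedCommutator {G : Type*} [Group G] {k : ℕ} (x : Fin (k + 1) → G) : G :=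
  (List.ofFn fun i : Fin k => x i.succ).foldl (fun a b => ⁅a, b⁆) (x 0)

namespace LNC

variable {G : Type*} [Group G]

local notation "γ" => Subgroup.lowerCentralSeries (⊤ : Subgroup G)

lemma lnc_succ {k : ℕ} (x : Fin (k + 2) → G) :
    leftNormalizedCommutator x =
      ⁅leftNormalizedCommutator (x ∘ Fin.castSucc), x (Fin.last (k + 1))⁆ := by
  unfold leftNormalizedCommutator
  rw [List.ofFn_succ' (fun i : Fin (k+1) => x i.succ), List.concat_eq_append,
    List.foldl_append]
  simp only [List.foldl_cons, List.foldl_nil]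
  simp [Function.comp_def, Fin.succ_last, Fin.castSucc_zero]

lemma comm_mem {m : ℕ} {g : G} (hg : g ∈ γ m) (y : G) : ⁅g, y⁆ ∈ γ (m + 1) := by
  rw [Subgroup.lowerCentralSeries_succ]
  exact Subgroup.subset_closure ⟨g, hg, y, Subgroup.mem_top y, rfl⟩

lemma comm_mem' {m : ℕ} {g : G} (hg : g ∈ γ m) (y : G) : ⁅y, g⁆ ∈ γ (m + 1) := by
  rw [← commutatorElement_inv]
  exact inv_mem (comm_mem hg y)

lemma lnc_mem {k : ℕ} (x : Fin (k + 1) → G) : leftNormalizedCommutator x ∈ γ k := by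
  induction k with
  | zero => exact Subgroup.mem_top _
  | succ k ih =>
    rw [lnc_succ]
    exact comm_mem (ih _) _

/-- C1 : linearity in the last slot. -/
lemma C1 {m : ℕ} {u : G} (hu : u ∈ γ m) (a b : G) :
    ⁅u, a * b⁆ * (⁅u, a⁆ * ⁅u, b⁆)⁻¹ ∈ γ (m + 2) := by
  have key : ⁅u, a * b⁆ * (⁅u, a⁆ * ⁅u, b⁆)⁻¹ = ⁅u, a⁆ * ⁅a, ⁅u, b⁆⁆ * ⁅u, a⁆⁻¹ := by
    simp only [commutatorElement_def]; group
  rw [key]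
  exact (Subgroup.lowerCentralSeries_normal ⊤ (m+2)).conj_mem _ (comm_mem' (comm_mem hu b) a) _

/-- C2 : linearity in the head. -/
lemma C2 {m : ℕ} {p q : G} (hp : p ∈ γ m) (hq : q ∈ γ m) (y : G) :
    ⁅p * q, y⁆ * (⁅p, y⁆ * ⁅q, y⁆)⁻¹ ∈ γ (m + 2) := by
  have key : ⁅p * q, y⁆ * (⁅p, y⁆ * ⁅q, y⁆)⁻¹ = ⁅p, ⁅q, y⁆⁆ * ⁅⁅q, y⁆, ⁅p, y⁆⁆ := by
    simp only [commutatorElement_def]; group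
  rw [key]
  exact mul_mem (comm_mem' (comm_mem hq y) p) (comm_mem (comm_mem hq y) _)

/-- C4 : congruence in the head. -/
lemma C4 {m : ℕ} {p q : G} (hq : q ∈ γ m) (hpq : p * q⁻¹ ∈ γ (m + 1)) (y : G) :
    ⁅p, y⁆ * ⁅q, y⁆⁻¹ ∈ γ (m + 2) := by
  have hw : p * q⁻¹ ∈ γ m := Subgroup.lowerCentralSeries_antitone ⊤ (Nat.le_succ m) hpq
  have h2 := C2 hw hq y
  have hwy : ⁅p * q⁻¹, y⁆ ∈ γ (m + 2) := comm_mem hpq y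
  have key : ⁅p, y⁆ * ⁅q, y⁆⁻¹ =
      (⁅(p * q⁻¹) * q, y⁆ * (⁅p * q⁻¹, y⁆ * ⁅q, y⁆)⁻¹) * ⁅p * q⁻¹, y⁆ := by
    simp only [commutatorElement_def]; group
  rw [key]
  exact mul_mem h2 hwy

end LNC

namespace LNC
variable {G : Type*} [Group G]
local notation "γ" => Subgroup.lowerCentralSeries (⊤ : Subgroup G)
local notation "c" => leftNormalizedCommutator

/-- Multilinearity of the left-normalized commutator modulo the next term. -/
lemma ML {k : ℕ} (j : Fin (k + 1)) (x : Fin (k + 1) → G) (a b : G) :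
    c (Function.update x j (a * b)) *
      (c (Function.update x j a) * c (Function.update x j b))⁻¹ ∈ γ (k + 1) := by
  induction k with
  | zero =>
    have hv : ∀ t : G, c (Function.update x j t) = t := by
      intro t
      have h0 : (Function.update x j t) 0 = t := by
        rw [Subsingleton.elim (0 : Fin 1) j, Function.update_self]
      simp [leftNormalizedCommutator, h0]
    rw [hv, hv, hv]
    have : a * b * (a * b)⁻¹ = 1 := by group
    simp only [mul_inv_rev] at this ⊢
    rw [this]
    exact one_mem _
  | succ k ih =>
    induction j using Fin.lastCases with
    | last =>
      have hcomp : ∀ t : G,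
          (Function.update x (Fin.last (k + 1)) t) ∘ Fin.castSucc = x ∘ Fin.castSucc := by
        intro t; funext i
        exact Function.update_of_ne (Fin.castSucc_lt_last i).ne _ _
      have hlast : ∀ t : G, Function.update x (Fin.last (k + 1)) t (Fin.last (k + 1)) = t :=
        fun t => Function.update_self _ _ _
      rw [lnc_succ, lnc_succ, lnc_succ, hcomp, hcomp, hcomp, hlast, hlast, hlast]
      exact C1 (lnc_mem _) a b
    | cast j' =>
      have hcomp : ∀ t : G,
          (Function.update x j'.castSucc t) ∘ Fin.castSucc
            = Function.update (x ∘ Fin.castSucc) j' t :=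
        fun t => Function.update_comp_eq_of_injective x (Fin.castSucc_injective _) j' t
      have hlast : ∀ t : G,
          Function.update x j'.castSucc t (Fin.last (k + 1)) = x (Fin.last (k + 1)) :=
        fun t => Function.update_of_ne (Fin.castSucc_lt_last j').ne' _ _
      rw [lnc_succ, lnc_succ, lnc_succ, hcomp, hcomp, hcomp, hlast, hlast, hlast]
      set y := x (Fin.last (k + 1))
      set cab := c (Function.update (x ∘ Fin.castSucc) j' (a * b)) with hcab
      set ca := c (Function.update (x ∘ Fin.castSucc) j' a) with hca
      set cb := c (Function.update (x ∘ Fin.castSucc) j' b) with hcb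
      have hma : ca ∈ γ k := by rw [hca]; exact lnc_mem _
      have hmb : cb ∈ γ k := by rw [hcb]; exact lnc_mem _
      have h1 : ⁅cab, y⁆ * ⁅ca * cb, y⁆⁻¹ ∈ γ (k + 2) :=
        C4 (m := k) (mul_mem hma hmb) (ih j' (x ∘ Fin.castSucc)) y
      have h2 : ⁅ca * cb, y⁆ * (⁅ca, y⁆ * ⁅cb, y⁆)⁻¹ ∈ γ (k + 2) :=
        C2 hma hmb y
      have key : ⁅cab, y⁆ * (⁅ca, y⁆ * ⁅cb, y⁆)⁻¹ =
          (⁅cab, y⁆ * ⁅ca * cb, y⁆⁻¹) * (⁅ca * cb, y⁆ * (⁅ca, y⁆ * ⁅cb, y⁆)⁻¹) := by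
        group
      have := mul_mem h1 h2
      rw [← key] at this
      exact this
end LNC

namespace LNC
variable {G : Type*} [Group G]
local notation "γ" => Subgroup.lowerCentralSeries (⊤ : Subgroup G)
local notation "c" => leftNormalizedCommutator

abbrev Qty (G : Type*) [Group G] (k : ℕ) :=
  ↥(Subgroup.lowerCentralSeries (⊤ : Subgroup G) k) ⧸
    (Subgroup.lowerCentralSeries (⊤ : Subgroup G) (k + 1)).subgroupOf (Subgroup.lowerCentralSeries (⊤ : Subgroup G) k)

lemma qeq {k : ℕ} {g₁ g₂ : G} (h₁ : g₁ ∈ γ k) (h₂ : g₂ ∈ γ k)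
    (h : g₁ * g₂⁻¹ ∈ γ (k + 1)) :
    (QuotientGroup.mk ⟨g₁, h₁⟩ : Qty G k) = QuotientGroup.mk ⟨g₂, h₂⟩ := by
  rw [QuotientGroup.eq, Subgroup.mem_subgroupOf]
  have hc : (((⟨g₁, h₁⟩ : γ k)⁻¹ * ⟨g₂, h₂⟩ : γ k) : G) = g₁⁻¹ * g₂ := rfl
  rw [hc]
  have key : g₁⁻¹ * g₂ = g₁⁻¹ * (g₁ * g₂⁻¹)⁻¹ * (g₁⁻¹)⁻¹ := by group
  rw [key]
  exact (Subgroup.lowerCentralSeries_normal ⊤ (k + 1)).conj_mem _ (inv_mem h) _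

/-- The commutative group structure on `γ k / γ (k+1)`. -/
def qcomm (k : ℕ) : CommGroup (Qty G k) :=
  { (inferInstance : Group (Qty G k)) with
    mul_comm := by
      intro a b
      refine QuotientGroup.induction_on a fun x => QuotientGroup.induction_on b fun y => ?_
      rw [← QuotientGroup.mk_mul, ← QuotientGroup.mk_mul, QuotientGroup.eq,
        Subgroup.mem_subgroupOf]
      have hc : (((x * y)⁻¹ * (y * x) : γ k) : G) = ⁅(y : G)⁻¹, (x : G)⁻¹⁆ := by
        simp only [commutatorElement_def, Subgroup.coe_mul, Subgroup.coe_inv, inv_inv]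
        group
      rw [hc]
      exact comm_mem (inv_mem y.2) _ }

/-- The left-normalized commutator class in `γ k / γ (k+1)`. -/
def fQ {k : ℕ} (x : Fin (k + 1) → G) : Qty G k :=
  QuotientGroup.mk ⟨c x, lnc_mem x⟩

lemma fQ_update_mul {k : ℕ} (x : Fin (k + 1) → G) (j : Fin (k + 1)) (a b : G) :
    fQ (Function.update x j (a * b)) =
      fQ (Function.update x j a) * fQ (Function.update x j b) := by
  unfold fQ
  rw [← QuotientGroup.mk_mul, MulMemClass.mk_mul_mk]
  exact qeq _ _ (ML j x a b)

/-- The slot homomorphism. -/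
def slotHom {k : ℕ} (x : Fin (k + 1) → G) (j : Fin (k + 1)) : G →* Qty G k :=
  MonoidHom.mk' (fun t => fQ (Function.update x j t)) (fun a b => fQ_update_mul x j a b)

lemma fQ_congr_single {k : ℕ} (x : Fin (k + 1) → G) (j : Fin (k + 1)) {a b : G}
    (h : Abelianization.of a = Abelianization.of b) :
    fQ (Function.update x j a) = fQ (Function.update x j b) := by
  letI : CommGroup (Qty G k) := qcomm k
  have hab : a⁻¹ * b ∈ commutator G := by
    have h' : (QuotientGroup.mk a : G ⧸ commutator G) = QuotientGroup.mk b := h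
    exact QuotientGroup.eq.mp h'
  have hb : b = a * (a⁻¹ * b) := by group
  have h1 : slotHom x j (a⁻¹ * b) = 1 :=
    Abelianization.commutator_subset_ker (slotHom x j) hab
  calc fQ (Function.update x j a) = slotHom x j a := rfl
    _ = slotHom x j a * slotHom x j (a⁻¹ * b) := by rw [h1]; exact (mul_one _).symm
    _ = slotHom x j (a * (a⁻¹ * b)) := (map_mul _ _ _).symm
    _ = slotHom x j b := by rw [← hb]
    _ = fQ (Function.update x j b) := rfl

lemma fQ_congr {k : ℕ} {x y : Fin (k + 1) → G}
    (h : ∀ i, Abelianization.of (x i) = Abelianization.of (y i)) : fQ x = fQ y := by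
  classical
  have key : ∀ s : Finset (Fin (k + 1)), fQ (s.piecewise y x) = fQ x := by
    intro s
    induction s using Finset.induction_on with
    | empty => rw [Finset.piecewise_empty]
    | @insert j s hj ih =>
      rw [Finset.piecewise_insert]
      have hval : (s.piecewise y x) j = x j := Finset.piecewise_eq_of_notMem _ _ _ hj
      have h2 : fQ (Function.update (s.piecewise y x) j (y j)) =
          fQ (Function.update (s.piecewise y x) j (x j)) :=
        fQ_congr_single _ _ (h j).symm
      rw [h2, ← hval, Function.update_eq_self, ih]
  have h3 := key Finset.univ
  rw [Finset.piecewise_univ] at h3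
  exact h3.symm

end LNC

namespace LNC
variable {G : Type*} [Group G]
local notation "γ" => Subgroup.lowerCentralSeries (⊤ : Subgroup G)
local notation "c" => leftNormalizedCommutator

lemma lnc_snoc {k : ℕ} (x : Fin (k + 1) → G) (y : G) :
    c (Fin.snoc x y) = ⁅c x, y⁆ := by
  rw [lnc_succ]
  congr 1
  · congr 1
    funext i
    simp
  · simp

/-- The homomorphism `γ k → γ (k+1)/γ (k+2)` given by `v ↦ ⁅v, y⁆`. -/
def psi (y : G) (k : ℕ) : (γ k) →* Qty G (k + 1) :=
  MonoidHom.mk' (fun v => QuotientGroup.mk ⟨⁅(v : G), y⁆, comm_mem v.2 y⟩)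
    (by
      intro v w
      rw [← QuotientGroup.mk_mul, MulMemClass.mk_mul_mk]
      exact qeq _ _ (by simpa using C2 v.2 w.2 y))

lemma psi_ker {k : ℕ} (y : G) (v : γ k) (hv : (v : G) ∈ γ (k + 1)) :
    psi y k v = 1 := by
  rw [psi, MonoidHom.mk'_apply, QuotientGroup.eq_one_iff, Subgroup.mem_subgroupOf]
  exact comm_mem hv y

/-- The induced homomorphism `γ k/γ (k+1) → γ (k+1)/γ (k+2)`. -/
def psiBar (y : G) (k : ℕ) : Qty G k →* Qty G (k + 1) :=
  QuotientGroup.lift _ (psi y k)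
    (fun v hv => psi_ker y v (Subgroup.mem_subgroupOf.mp hv))

lemma gen (k : ℕ) (g : G) (hg : g ∈ γ k) :
    (QuotientGroup.mk ⟨g, hg⟩ : Qty G k) ∈
      Subgroup.closure
        (Set.range fun x : Fin (k + 1) → G =>
          (QuotientGroup.mk ⟨c x, lnc_mem x⟩ : Qty G k)) := by
  induction k generalizing g with
  | zero =>
    apply Subgroup.subset_closure
    exact ⟨fun _ => g, rfl⟩
  | succ k ih =>
    have hg' : g ∈ Subgroup.closure
        { x | ∃ p ∈ γ k, ∃ q ∈ (⊤ : Subgroup G), p * q * p⁻¹ * q⁻¹ = x } :=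
      (Subgroup.mem_lowerCentralSeries_succ_iff ⊤ k g).mp hg
    revert hg
    induction hg' using Subgroup.closure_induction with
    | mem z hz =>
      intro hm
      obtain ⟨p, hp, q, -, rfl⟩ := hz
      have hpq : p * q * p⁻¹ * q⁻¹ = ⁅p, q⁆ := (commutatorElement_def p q).symm
      have key : (QuotientGroup.mk ⟨p * q * p⁻¹ * q⁻¹, hm⟩ : Qty G (k + 1)) =
          psiBar q k (QuotientGroup.mk ⟨p, hp⟩) := by
        rfl
      rw [key]
      have hmem := ih p hp
      have h2 : psiBar q k (QuotientGroup.mk ⟨p, hp⟩) ∈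
          Subgroup.map (psiBar q k)
            (Subgroup.closure (Set.range fun x : Fin (k + 1) → G =>
              (QuotientGroup.mk ⟨c x, lnc_mem x⟩ : Qty G k))) :=
        Subgroup.mem_map_of_mem _ hmem
      rw [MonoidHom.map_closure] at h2
      refine Subgroup.closure_mono ?_ h2
      rintro - ⟨-, ⟨x, rfl⟩, rfl⟩
      refine ⟨Fin.snoc x q, ?_⟩
      have h3 : psiBar q k (QuotientGroup.mk ⟨c x, lnc_mem x⟩) =
          QuotientGroup.mk ⟨⁅c x, q⁆, comm_mem (lnc_mem x) q⟩ := rfl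
      rw [h3]
      exact congrArg QuotientGroup.mk (Subtype.ext (lnc_snoc x q))
    | one =>
      intro hm
      have : (⟨(1 : G), hm⟩ : γ (k + 1)) = 1 := rfl
      rw [this, QuotientGroup.mk_one]
      exact one_mem _
    | mul a b ha hb iha ihb =>
      intro hm
      have ha' : a ∈ γ (k + 1) := (Subgroup.mem_lowerCentralSeries_succ_iff ⊤ k a).mpr ha
      have hb' : b ∈ γ (k + 1) := (Subgroup.mem_lowerCentralSeries_succ_iff ⊤ k b).mpr hb
      have : (⟨a * b, hm⟩ : γ (k + 1)) = ⟨a, ha'⟩ * ⟨b, hb'⟩ := rfl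
      rw [this, QuotientGroup.mk_mul]
      exact mul_mem (iha ha') (ihb hb')
    | inv a ha iha =>
      intro hm
      have ha' : a ∈ γ (k + 1) := (Subgroup.mem_lowerCentralSeries_succ_iff ⊤ k a).mpr ha
      have : (⟨a⁻¹, hm⟩ : γ (k + 1)) = (⟨a, ha'⟩)⁻¹ := rfl
      rw [this, QuotientGroup.mk_inv]
      exact inv_mem (iha ha')

end LNC

/-- For the free group `F` of rank `n`, with `A = F/[F,F]`, there is for each
`k ≥ 1` (here `k+1`) a surjective homomorphism from the `(k+1)`-fold tensor power of `A`
over `ℤ` onto `γ_{k+1}(F)/γ_{k+2}(F)` sending `x̄_1 ⊗ ⋯ ⊗ x̄_{k+1}` to the class of the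
left-normalized commutator `[x_1, …, x_{k+1}]`. -/
theorem stmt2 (n : ℕ) (k : ℕ) :
    ∃ φ : (⨂[ℤ] _ : Fin (k + 1), Additive (Abelianization (FreeGroup (Fin n)))) →+
        Additive (↥(Subgroup.lowerCentralSeries (⊤ : Subgroup (FreeGroup (Fin n))) k) ⧸
          (Subgroup.lowerCentralSeries (⊤ : Subgroup (FreeGroup (Fin n))) (k + 1)).subgroupOf
            (Subgroup.lowerCentralSeries (⊤ : Subgroup (FreeGroup (Fin n))) k)),
      Function.Surjective φ ∧
        ∀ (x : Fin (k + 1) → FreeGroup (Fin n))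
          (h : leftNormalizedCommutator x ∈ Subgroup.lowerCentralSeries (⊤ : Subgroup (FreeGroup (Fin n))) k),
          φ (PiTensorProduct.tprod ℤ
              (fun i => Additive.ofMul (Abelianization.of (x i)))) =
            Additive.ofMul (QuotientGroup.mk (⟨leftNormalizedCommutator x, h⟩ :
              ↥(Subgroup.lowerCentralSeries (⊤ : Subgroup (FreeGroup (Fin n))) k))) := by
  classical
  set F := FreeGroup (Fin n) with hF
  letI : CommGroup (LNC.Qty F k) := LNC.qcomm k
  let rep : Additive (Abelianization F) → F := fun z => (Additive.toMul z).out
  have hrep : ∀ z : Additive (Abelianization F),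
      Abelianization.of (rep z) = Additive.toMul z :=
    fun z => QuotientGroup.out_eq' (Additive.toMul z)
  let gfun : (Fin (k + 1) → Additive (Abelianization F)) → Additive (LNC.Qty F k) :=
    fun z => Additive.ofMul (LNC.fQ (fun i => rep (z i)))
  have hcomp : ∀ (z : Fin (k + 1) → Additive (Abelianization F)) (j : Fin (k + 1))
      (t : Additive (Abelianization F)),
      (fun i => rep (Function.update z j t i))
        = Function.update (fun i => rep (z i)) j (rep t) := by
    intro z j t
    funext i
    rw [Function.update_apply, Function.update_apply, apply_ite rep]
  have hadd : ∀ (inst : DecidableEq (Fin (k + 1)))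
      (z : Fin (k + 1) → Additive (Abelianization F)) (j : Fin (k + 1))
      (a b : Additive (Abelianization F)),
      gfun (@Function.update _ _ inst z j (a + b))
        = gfun (@Function.update _ _ inst z j a) + gfun (@Function.update _ _ inst z j b) := by
    intro inst z j a b
    have hi : inst = instDecidableEqFin (k + 1) := Subsingleton.elim _ _
    subst hi
    have h1 : LNC.fQ (fun i => rep (Function.update z j (a + b) i))
        = LNC.fQ (fun i => rep (Function.update z j a i))
          * LNC.fQ (fun i => rep (Function.update z j b i)) := by
      rw [hcomp, hcomp, hcomp]
      have h2 : LNC.fQ (Function.update (fun i => rep (z i)) j (rep (a + b)))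
          = LNC.fQ (Function.update (fun i => rep (z i)) j (rep a * rep b)) := by
        refine LNC.fQ_congr_single _ _ ?_
        rw [map_mul, hrep, hrep, hrep]
        rfl
      rw [h2, LNC.fQ_update_mul]
    calc gfun (Function.update z j (a + b))
        = Additive.ofMul (LNC.fQ (fun i => rep (Function.update z j a i))
            * LNC.fQ (fun i => rep (Function.update z j b i))) := by
          exact congrArg Additive.ofMul h1
      _ = gfun (Function.update z j a) + gfun (Function.update z j b) := ofMul_mul _ _
  let ml : MultilinearMap ℤ (fun _ : Fin (k + 1) => Additive (Abelianization F))
      (Additive (LNC.Qty F k)) :=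
    { toFun := gfun
      map_update_add' := by
        intro inst z j a b
        exact hadd inst z j a b
      map_update_smul' := by
        intro inst z j cc a
        let hj : Additive (Abelianization F) →+ Additive (LNC.Qty F k) :=
          AddMonoidHom.mk' (fun t => gfun (@Function.update _ _ inst z j t)) (hadd inst z j)
        exact map_zsmul hj cc a }
  refine ⟨(PiTensorProduct.lift ml).toAddMonoidHom, ?_, ?_⟩
  · -- surjectivity
    intro q
    obtain ⟨s, hs⟩ := QuotientGroup.mk_surjective (Additive.toMul q)
    obtain ⟨g, hg⟩ := s
    have hq : q = Additive.ofMul (QuotientGroup.mk (⟨g, hg⟩ : Subgroup.lowerCentralSeries (⊤ : Subgroup F) k)) :=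
      (congrArg Additive.ofMul hs).symm
    have hgen := LNC.gen (G := F) k g hg
    have hle : Subgroup.closure
        (Set.range fun x : Fin (k + 1) → F =>
          (QuotientGroup.mk ⟨leftNormalizedCommutator x, LNC.lnc_mem x⟩ : LNC.Qty F k)) ≤
        AddSubgroup.toSubgroup' (PiTensorProduct.lift ml).toAddMonoidHom.range := by
      rw [Subgroup.closure_le]
      rintro - ⟨x, rfl⟩
      refine ⟨PiTensorProduct.tprod ℤ (fun i => Additive.ofMul (Abelianization.of (x i))), ?_⟩
      show (PiTensorProduct.lift ml)
          (PiTensorProduct.tprod ℤ (fun i => Additive.ofMul (Abelianization.of (x i)))) = _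
      rw [PiTensorProduct.lift.tprod]
      show gfun _ = _
      exact congrArg Additive.ofMul (LNC.fQ_congr (fun i => hrep _))
    have hmem : Additive.ofMul (QuotientGroup.mk (⟨g, hg⟩ : Subgroup.lowerCentralSeries (⊤ : Subgroup F) k))
        ∈ (PiTensorProduct.lift ml).toAddMonoidHom.range := hle hgen
    obtain ⟨t, ht⟩ := hmem
    exact ⟨t, ht.trans hq.symm⟩
  · intro x h
    show (PiTensorProduct.lift ml)
        (PiTensorProduct.tprod ℤ (fun i => Additive.ofMul (Abelianization.of (x i)))) = _
    rw [PiTensorProduct.lift.tprod]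
    show gfun _ = _
    exact congrArg Additive.ofMul (LNC.fQ_congr (fun i => hrep _))
end

section
/- The group G(K₁) = ⟨x, y | x = x^{y x y⁻² x y}⟩ is isomorphic to a semidirect product F₃ ⋊ ℤ, where F₃ is the free group of rank 3 with basis y₀, y₁, y₂, and the generator of ℤ acts by the automorphism y₀ ↦ y₁, y₁ ↦ y₂, y₂ ↦ y₂y₁⁻²y₀y₁⁻¹y₂². -/
private abbrev x : FreeGroup (Fin 2) := FreeGroup.of 0
private abbrev y : FreeGroup (Fin 2) := FreeGroup.of 1

/-- `G(K₁) = ⟨x, y ∣ x = x^{y x y⁻² x y}⟩`. -/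
def GK1 : Type :=
  PresentedGroup ({x⁻¹ * (y * x * y⁻¹ * y⁻¹ * x * y)⁻¹ * x * (y * x * y⁻¹ * y⁻¹ * x * y)} :
    Set (FreeGroup (Fin 2)))

instance : Group GK1 := by unfold GK1; infer_instance

private abbrev y₀ : FreeGroup (Fin 3) := FreeGroup.of 0
private abbrev y₁ : FreeGroup (Fin 3) := FreeGroup.of 1
private abbrev y₂ : FreeGroup (Fin 3) := FreeGroup.of 2

namespace Stmt6Aux

abbrev F3 := FreeGroup (Fin 3)

/-- The shift endomorphism. -/
def σf : F3 →* F3 :=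
  FreeGroup.lift ![y₁, y₂, y₂ * y₁⁻¹ * y₁⁻¹ * y₀ * y₁⁻¹ * y₂ * y₂]

/-- Its inverse. -/
def τf : F3 →* F3 :=
  FreeGroup.lift ![y₀ * y₀ * y₁⁻¹ * y₂ * y₁⁻¹ * y₁⁻¹ * y₀, y₀, y₁]

theorem τσ : τf.comp σf = MonoidHom.id F3 := by
  ext i
  fin_cases i <;> simp [σf, τf] <;> group

theorem στ : σf.comp τf = MonoidHom.id F3 := by
  ext i
  fin_cases i <;> simp [σf, τf] <;> group

/-- The shift automorphism. -/
def σA : MulAut F3 := MonoidHom.toMulEquiv σf τf τσ στ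

@[simp] theorem σA_apply (n : F3) : σA n = σf n := rfl

@[simp] theorem σA_symm_apply (n : F3) : σA⁻¹ n = τf n := rfl

/-- The action of `ℤ`. -/
def phi : Multiplicative ℤ →* MulAut F3 := zpowersHom (MulAut F3) σA

theorem phi_apply (g : Multiplicative ℤ) : phi g = σA ^ (Multiplicative.toAdd g) := rfl

/-- The relators of `GK1`. -/
abbrev rels : Set (FreeGroup (Fin 2)) :=
  {x⁻¹ * (y * x * y⁻¹ * y⁻¹ * x * y)⁻¹ * x * (y * x * y⁻¹ * y⁻¹ * x * y)}

/-- The image of `x` in `GK1`. -/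
def X : GK1 := PresentedGroup.of (rels := rels) 0

/-- The image of `y` in `GK1`. -/
def Y : GK1 := PresentedGroup.of (rels := rels) 1

theorem rel : X * (Y * X * Y⁻¹ * Y⁻¹ * X * Y) = (Y * X * Y⁻¹ * Y⁻¹ * X * Y) * X := by
  have h : (PresentedGroup.mk rels
      (x⁻¹ * (y * x * y⁻¹ * y⁻¹ * x * y)⁻¹ * x * (y * x * y⁻¹ * y⁻¹ * x * y)) : GK1) = 1 := by
    apply (QuotientGroup.eq_one_iff _).2
    exact Subgroup.subset_normalClosure rfl
  have h1 : X⁻¹ * (Y * X * Y⁻¹ * Y⁻¹ * X * Y)⁻¹ * X * (Y * X * Y⁻¹ * Y⁻¹ * X * Y) = 1 := by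
    have h' := h
    simp only [map_mul, map_inv] at h'
    exact h'
  calc X * (Y * X * Y⁻¹ * Y⁻¹ * X * Y)
      = ((Y * X * Y⁻¹ * Y⁻¹ * X * Y) * X) *
        (X⁻¹ * (Y * X * Y⁻¹ * Y⁻¹ * X * Y)⁻¹ * X * (Y * X * Y⁻¹ * Y⁻¹ * X * Y)) := by group
    _ = (Y * X * Y⁻¹ * Y⁻¹ * X * Y) * X := by rw [h1, mul_one]

/-- `F₃ →* GK1`, `y_k ↦ x⁻ᵏ y xᵏ`. -/
def gN : F3 →* GK1 :=
  FreeGroup.lift ![Y, X⁻¹ * Y * X, X⁻¹ * (X⁻¹ * Y * X) * X]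

/-- `ℤ →* GK1`, `1 ↦ x⁻¹`. -/
def gZ : Multiplicative ℤ →* GK1 := zpowersHom GK1 X⁻¹

theorem keyσ (n : F3) : gN (σf n) = X⁻¹ * gN n * X := by
  have : gN.comp σf = (MulAut.conj X⁻¹).toMonoidHom.comp gN := by
    ext i
    fin_cases i
    · simp [σf, gN, MulAut.conj_apply]
    · simp [σf, gN, MulAut.conj_apply]
    · simp only [MonoidHom.comp_apply, σf, gN, Fin.isValue, FreeGroup.lift_apply_of, map_mul, map_inv,
        MulEquiv.coe_toMonoidHom, MulAut.conj_apply]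
      norm_num
      have hc : (Y * X * Y⁻¹ * Y⁻¹ * X * Y) * X⁻¹ = X⁻¹ * (Y * X * Y⁻¹ * Y⁻¹ * X * Y) := by
        calc (Y * X * Y⁻¹ * Y⁻¹ * X * Y) * X⁻¹
            = X⁻¹ * (X * (Y * X * Y⁻¹ * Y⁻¹ * X * Y)) * X⁻¹ := by group
          _ = X⁻¹ * ((Y * X * Y⁻¹ * Y⁻¹ * X * Y) * X) * X⁻¹ := by rw [rel]
          _ = X⁻¹ * (Y * X * Y⁻¹ * Y⁻¹ * X * Y) := by group
      calc (X⁻¹ * (X⁻¹ * Y * X) * X) * (X⁻¹ * Y * X)⁻¹ * (X⁻¹ * Y * X)⁻¹ * Y *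
            (X⁻¹ * Y * X)⁻¹ * (X⁻¹ * (X⁻¹ * Y * X) * X) * (X⁻¹ * (X⁻¹ * Y * X) * X)
          = X⁻¹ * X⁻¹ * ((Y * X * Y⁻¹ * Y⁻¹ * X * Y) * X⁻¹) * (Y⁻¹ * X⁻¹ * Y * Y) * X * X := by
            group
        _ = X⁻¹ * X⁻¹ * (X⁻¹ * (Y * X * Y⁻¹ * Y⁻¹ * X * Y)) * (Y⁻¹ * X⁻¹ * Y * Y) * X * X := by
            rw [hc]
        _ = X⁻¹ * (X⁻¹ * (X⁻¹ * Y * X) * X) * X := by group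
  exact DFunLike.congr_fun this n

theorem keyτ (n : F3) : gN (τf n) = X * gN n * X⁻¹ := by
  have h := keyσ (τf n)
  have h2 : σf (τf n) = n := DFunLike.congr_fun στ n
  rw [h2] at h
  rw [h]
  group

theorem keyZ : ∀ (k : ℤ) (n : F3), gN ((σA ^ k) n) = X⁻¹ ^ k * gN n * (X⁻¹ ^ k)⁻¹ := by
  intro k
  induction k using Int.induction_on with
  | zero => simp
  | succ i ih =>
      intro n
      have h : (σA ^ ((i : ℤ) + 1)) n = (σA ^ (i : ℤ)) (σf n) := by
        rw [zpow_add, zpow_one]; rfl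
      rw [h, ih, keyσ]
      rw [zpow_add, zpow_one]
      group
  | pred i ih =>
      intro n
      have h : (σA ^ ((-i : ℤ) - 1)) n = (σA ^ (-i : ℤ)) (τf n) := by
        rw [sub_eq_add_neg, zpow_add, zpow_neg_one]; rfl
      rw [h, ih, keyτ]
      rw [sub_eq_add_neg, zpow_add, zpow_neg_one]
      group

theorem hcompat : ∀ g : Multiplicative ℤ,
    gN.comp (phi g).toMonoidHom = (MulAut.conj (gZ g)).toMonoidHom.comp gN := by
  intro g
  ext n
  simp only [MonoidHom.comp_apply, MulEquiv.coe_toMonoidHom, MulAut.conj_apply, phi_apply]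
  rw [show gZ g = X⁻¹ ^ (Multiplicative.toAdd g) from rfl]
  exact keyZ _ (FreeGroup.of n)

/-- The homomorphism `F₃ ⋊ ℤ →* GK1`. -/
def ghom : (F3 ⋊[phi] Multiplicative ℤ) →* GK1 := SemidirectProduct.lift gN gZ hcompat

abbrev SD := SemidirectProduct F3 (Multiplicative ℤ) phi

/-- The generator of `ℤ`. -/
def t : Multiplicative ℤ := Multiplicative.ofAdd 1

open SemidirectProduct

theorem phi_t (n : F3) : phi t n = σf n := rfl
theorem phi_t_inv (n : F3) : phi t⁻¹ n = τf n := rfl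
theorem phi_mul (g h : Multiplicative ℤ) (n : F3) : phi (g * h) n = phi g (phi h n) := by
  rw [map_mul]; rfl
theorem inl_inv (a : F3) : (inl a : SD)⁻¹ = inl a⁻¹ := (map_inv _ _).symm
theorem inr_inv (g : Multiplicative ℤ) : (inr g : SD)⁻¹ = inr g⁻¹ := (map_inv _ _).symm
theorem inl_mul_inl (a b : F3) (c : SD) : (inl a : SD) * (inl b * c) = inl (a * b) * c := by
  rw [← mul_assoc, ← map_mul]
theorem inl_mul_inl' (a b : F3) : (inl a : SD) * inl b = inl (a * b) := (map_mul _ _ _).symm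
theorem inr_mul_inr (g h : Multiplicative ℤ) (c : SD) :
    (inr g : SD) * (inr h * c) = inr (g * h) * c := by rw [← mul_assoc, ← map_mul]
theorem inr_mul_inr' (g h : Multiplicative ℤ) : (inr g : SD) * inr h = inr (g * h) :=
  (map_mul _ _ _).symm
theorem inr_mul_inl' (g : Multiplicative ℤ) (n : F3) :
    (inr g : SD) * inl n = inl (phi g n) * inr g := by
  rw [inl_aut, mul_assoc, mul_assoc, ← map_mul, inv_mul_cancel, map_one, mul_one]
theorem inr_mul_inl (g : Multiplicative ℤ) (n : F3) (c : SD) :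
    (inr g : SD) * (inl n * c) = inl (phi g n) * (inr g * c) := by
  rw [← mul_assoc, inr_mul_inl', mul_assoc]

theorem h1 : (inl y₀ * inr t⁻¹ * (inl y₀)⁻¹ * (inl y₀)⁻¹ * inr t⁻¹ * inl y₀ : SD)
    = inl (y₂ * y₁⁻¹ * y₁⁻¹ * y₀) * inr (t⁻¹ * t⁻¹) := by
  simp only [mul_inv_rev, inl_inv, inr_inv, inv_inv, mul_assoc, inl_mul_inl, inl_mul_inl',
    inr_mul_inr, inr_mul_inr', inr_mul_inl, inr_mul_inl', phi_mul, phi_t, phi_t_inv]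
  apply SemidirectProduct.ext
  · simp only [mul_left, left_inl, right_inl, left_inr, map_one, mul_one, one_mul]
    simp [σf, τf]
    group
  · simp only [mul_right, right_inl, right_inr, one_mul, mul_one]

theorem h2 : (inr t : SD) * (inl y₀ * inr t⁻¹ * (inl y₀)⁻¹ * (inl y₀)⁻¹ * inr t⁻¹ * inl y₀) *
    inr t⁻¹ = inl (y₂ * y₁⁻¹ * y₁⁻¹ * y₀) * inr (t⁻¹ * t⁻¹) := by
  simp only [mul_inv_rev, inl_inv, inr_inv, inv_inv, mul_assoc, inl_mul_inl, inl_mul_inl',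
    inr_mul_inr, inr_mul_inr', inr_mul_inl, inr_mul_inl', phi_mul, phi_t, phi_t_inv]
  apply SemidirectProduct.ext
  · simp only [mul_left, left_inl, right_inl, left_inr, map_one, mul_one, one_mul]
    simp [σf, τf]
    group
  · simp only [mul_right, right_inl, right_inr, one_mul, mul_one]
    group

/-- The images of the generators of `GK1` in the semidirect product. -/
def ffun : Fin 2 → SD := ![inr t⁻¹, inl y₀]

set_option maxRecDepth 10000 in
theorem hrels : ∀ r ∈ rels, FreeGroup.lift ffun r = 1 := by
  intro r hr
  rw [Set.mem_singleton_iff] at hr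
  subst hr
  simp only [map_mul, map_inv, FreeGroup.lift_apply_of, ffun, Matrix.cons_val_zero, Matrix.cons_val_one,
    Matrix.head_cons]
  have hW : (inr t : SD) * (inl y₀ * (inr t)⁻¹ * (inl y₀)⁻¹ * (inl y₀)⁻¹ * (inr t)⁻¹ * inl y₀) *
      (inr t)⁻¹ = inl y₀ * (inr t)⁻¹ * (inl y₀)⁻¹ * (inl y₀)⁻¹ * (inr t)⁻¹ * inl y₀ := by
    rw [show ((inr t : SD))⁻¹ = inr t⁻¹ from (map_inv _ _).symm]
    rw [h2, h1]
  calc (inr t : SD)⁻¹⁻¹ * (inl y₀ * (inr t)⁻¹ * (inl y₀)⁻¹ * (inl y₀)⁻¹ * (inr t)⁻¹ * inl y₀)⁻¹ *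
      (inr t)⁻¹ * (inl y₀ * (inr t)⁻¹ * (inl y₀)⁻¹ * (inl y₀)⁻¹ * (inr t)⁻¹ * inl y₀)
      = ((inr t : SD) * (inl y₀ * (inr t)⁻¹ * (inl y₀)⁻¹ * (inl y₀)⁻¹ * (inr t)⁻¹ * inl y₀) *
        (inr t)⁻¹)⁻¹ * (inl y₀ * (inr t)⁻¹ * (inl y₀)⁻¹ * (inl y₀)⁻¹ * (inr t)⁻¹ * inl y₀) := by
        group
    _ = 1 := by rw [hW]; group

/-- The homomorphism `GK1 →* F₃ ⋊ ℤ`. -/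
def fhom : GK1 →* SD := PresentedGroup.toGroup hrels

theorem fhom_X : fhom X = inr t⁻¹ :=
  (PresentedGroup.toGroup.of hrels).trans rfl

theorem fhom_Y : fhom Y = inl y₀ :=
  (PresentedGroup.toGroup.of hrels).trans rfl

theorem gf : ghom.comp fhom = MonoidHom.id GK1 := by
  refine PresentedGroup.ext fun i => ?_
  fin_cases i
  · show ghom (fhom X) = X
    rw [fhom_X, show ghom (inr t⁻¹) = gZ t⁻¹ from SemidirectProduct.lift_inr _ _ _ _,
      show gZ t⁻¹ = X⁻¹ ^ (Multiplicative.toAdd t⁻¹) from rfl]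
    simp [t]
  · show ghom (fhom Y) = Y
    rw [fhom_Y, show ghom (inl y₀) = gN y₀ from SemidirectProduct.lift_inl _ _ _ _]
    simp [gN]

theorem fg : fhom.comp ghom = MonoidHom.id SD := by
  apply SemidirectProduct.hom_ext
  · refine FreeGroup.ext_hom _ _ fun j => ?_
    simp only [MonoidHom.comp_apply, MonoidHom.id_apply, ghom, SemidirectProduct.lift_inl]
    fin_cases j
    · show fhom (gN y₀) = inl y₀
      rw [show gN y₀ = Y by simp [gN], fhom_Y]
    · show fhom (gN y₁) = inl y₁
      rw [show gN y₁ = X⁻¹ * Y * X by simp [gN]]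
      rw [map_mul, map_mul, map_inv, fhom_X, fhom_Y]
      rw [show ((inr t⁻¹ : SD))⁻¹ = inr t from by rw [← inr_inv, inv_inv]]
      simp only [mul_assoc, inr_mul_inl, inr_mul_inl', inr_mul_inr, inr_mul_inr', phi_mul,
        phi_t, phi_t_inv]
      rw [mul_inv_cancel, map_one, mul_one]
      simp [σf]
    · show fhom (gN y₂) = inl y₂
      rw [show gN y₂ = X⁻¹ * (X⁻¹ * Y * X) * X by simp [gN]]
      rw [map_mul, map_mul, map_mul, map_mul, map_inv, fhom_X, fhom_Y]
      rw [show ((inr t⁻¹ : SD))⁻¹ = inr t from by rw [← inr_inv, inv_inv]]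
      simp only [mul_assoc, inr_mul_inl, inr_mul_inl', inr_mul_inr, inr_mul_inr', phi_mul,
        phi_t, phi_t_inv]
      rw [show (t * (t * (t⁻¹ * t⁻¹))) = 1 by group, map_one, mul_one]
      rw [show σf (σf y₀) = y₂ by simp [σf]]
  · refine MonoidHom.ext_mint ?_
    simp only [MonoidHom.comp_apply, MonoidHom.id_apply]
    rw [show ghom (inr (Multiplicative.ofAdd 1)) = gZ (Multiplicative.ofAdd 1) from
      SemidirectProduct.lift_inr _ _ _ _]
    rw [show gZ (Multiplicative.ofAdd 1) = X⁻¹ ^ (Multiplicative.toAdd (Multiplicative.ofAdd 1))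
      from rfl]
    show fhom (X⁻¹ ^ (1 : ℤ)) = inr t
    rw [zpow_one, map_inv, fhom_X, ← inr_inv, inv_inv]

/-- The isomorphism. -/
def iso : GK1 ≃* SD := MonoidHom.toMulEquiv fhom ghom gf fg

end Stmt6Aux

/-- `G(K₁) ≅ F₃ ⋊ ℤ`, where the generator of `ℤ` acts on the free group `F₃` on
`y₀, y₁, y₂` by `y₀ ↦ y₁`, `y₁ ↦ y₂`, `y₂ ↦ y₂ y₁⁻² y₀ y₁⁻¹ y₂²`. -/
theorem stmt6 :
    ∃ φ : Multiplicative ℤ →* MulAut (FreeGroup (Fin 3)),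
      φ (Multiplicative.ofAdd 1) y₀ = y₁ ∧
      φ (Multiplicative.ofAdd 1) y₁ = y₂ ∧
      φ (Multiplicative.ofAdd 1) y₂ = y₂ * y₁⁻¹ * y₁⁻¹ * y₀ * y₁⁻¹ * y₂ * y₂ ∧
      Nonempty (GK1 ≃* (FreeGroup (Fin 3) ⋊[φ] Multiplicative ℤ)) := by
  refine ⟨Stmt6Aux.phi, ?_, ?_, ?_, ⟨Stmt6Aux.iso⟩⟩
  · show Stmt6Aux.σf y₀ = y₁
    simp [Stmt6Aux.σf]
  · show Stmt6Aux.σf y₁ = y₂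
    simp [Stmt6Aux.σf]
  · show Stmt6Aux.σf y₂ = y₂ * y₁⁻¹ * y₁⁻¹ * y₀ * y₁⁻¹ * y₂ * y₂
    simp [Stmt6Aux.σf]
end

section
/- The group G(K₂) = ⟨x, y | [x^{y⁻¹xy⁻¹} x^{yx⁻¹y}, x] = 1⟩ is isomorphic to a semidirect product F₅ ⋊ ℤ, where F₅ is the free group of rank 5 on y₀,...,y₄ and the generator x of ℤ acts by yᵢ ↦ y_{i+1} for 0 ≤ i ≤ 3 and y₄ ↦ y₄⁻¹y₃y₄y₃⁻¹y₂⁻²y₁⁻¹y₀y₁y₂⁻¹y₁⁻¹y₂y₃²y₄. -/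
open scoped commutatorElement

/-- `G(K₂) = ⟨x, y ∣ [x^{y⁻¹xy⁻¹} x^{yx⁻¹y}, x] = 1⟩`, the group of the virtual knot 4.21. -/
def GK2 : Type :=
  PresentedGroup
    ({⁅(y⁻¹ * x * y⁻¹)⁻¹ * x * (y⁻¹ * x * y⁻¹) * ((y * x⁻¹ * y)⁻¹ * x * (y * x⁻¹ * y)), x⁆} :
      Set (FreeGroup (Fin 2)))

instance : Group GK2 := by unfold GK2; infer_instance

private abbrev z (i : Fin 5) : FreeGroup (Fin 5) := FreeGroup.of i

namespace S8

/-! ### Generic group-word lemmas -/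

variable {G : Type*} [Group G] (X Y : G)

def cword : G := (Y⁻¹ * X * Y⁻¹)⁻¹ * X * (Y⁻¹ * X * Y⁻¹) * ((Y * X⁻¹ * Y)⁻¹ * X * (Y * X⁻¹ * Y))
def relword : G := ⁅cword X Y, X⁆
def yk (k : ℕ) : G := (X ^ k)⁻¹ * Y * X ^ k
def keyRHS : G := (yk X Y 4)⁻¹ * yk X Y 3 * yk X Y 4 * (yk X Y 3)⁻¹ * (yk X Y 2)⁻¹ *
  (yk X Y 2)⁻¹ * (yk X Y 1)⁻¹ * yk X Y 0 * yk X Y 1 * (yk X Y 2)⁻¹ * (yk X Y 1)⁻¹ *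
  yk X Y 2 * yk X Y 3 * yk X Y 3 * yk X Y 4
def Btail : G := (X ^ 2)⁻¹ * (yk X Y 2)⁻¹ * (yk X Y 1)⁻¹ * yk X Y 2 * yk X Y 3 * yk X Y 3 * yk X Y 4

lemma e1 : yk X Y 5 = (yk X Y 4)⁻¹ * ((X ^ 4)⁻¹ * cword X Y * X ^ 4) * Btail X Y := by
  simp only [yk, cword, Btail]; group
lemma e2 : (yk X Y 4)⁻¹ * ((X ^ 3)⁻¹ * cword X Y * X ^ 3) * Btail X Y = keyRHS X Y := by
  simp only [yk, cword, Btail, keyRHS]; group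

lemma hk (hc : cword X Y * X = X * cword X Y) :
    ∀ k : ℕ, (X ^ k)⁻¹ * cword X Y * X ^ k = cword X Y := by
  have h1 : X⁻¹ * cword X Y * X = cword X Y := by
    rw [mul_assoc, hc, ← mul_assoc, inv_mul_cancel, one_mul]
  intro k
  induction k with
  | zero => simp
  | succ n ih =>
    calc (X ^ (n + 1))⁻¹ * cword X Y * X ^ (n + 1)
        = X⁻¹ * ((X ^ n)⁻¹ * cword X Y * X ^ n) * X := by rw [pow_succ]; group
      _ = X⁻¹ * cword X Y * X := by rw [ih]
      _ = cword X Y := h1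

lemma lemA (h : relword X Y = 1) : yk X Y 5 = keyRHS X Y := by
  have hc : cword X Y * X = X * cword X Y := commutatorElement_eq_one_iff_mul_comm.mp h
  calc yk X Y 5 = (yk X Y 4)⁻¹ * ((X ^ 4)⁻¹ * cword X Y * X ^ 4) * Btail X Y := e1 X Y
    _ = (yk X Y 4)⁻¹ * ((X ^ 3)⁻¹ * cword X Y * X ^ 3) * Btail X Y := by
        rw [hk X Y hc 4]
        conv_rhs => rw [hk X Y hc 3]
    _ = keyRHS X Y := e2 X Y

lemma lemB (h : yk X Y 5 = keyRHS X Y) : relword X Y = 1 := by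
  have hE : (yk X Y 4)⁻¹ * ((X ^ 4)⁻¹ * cword X Y * X ^ 4) * Btail X Y
      = (yk X Y 4)⁻¹ * ((X ^ 3)⁻¹ * cword X Y * X ^ 3) * Btail X Y := by
    rw [← e1, h, e2]
  have hE2 : (X ^ 4)⁻¹ * cword X Y * X ^ 4 = (X ^ 3)⁻¹ * cword X Y * X ^ 3 :=
    mul_left_cancel (mul_right_cancel hE)
  have h1 : X⁻¹ * cword X Y * X = cword X Y := by
    calc X⁻¹ * cword X Y * X = X ^ 3 * ((X ^ 4)⁻¹ * cword X Y * X ^ 4) * (X ^ 3)⁻¹ := by group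
      _ = X ^ 3 * ((X ^ 3)⁻¹ * cword X Y * X ^ 3) * (X ^ 3)⁻¹ := by rw [hE2]
      _ = cword X Y := by group
  have hc : cword X Y * X = X * cword X Y := by
    calc cword X Y * X = X * (X⁻¹ * cword X Y * X) := by group
      _ = X * cword X Y := by rw [h1]
  exact commutatorElement_eq_one_iff_mul_comm.mpr hc

lemma ykSucc (k : ℕ) : yk X Y (k + 1) = X⁻¹ * yk X Y k * X := by
  simp only [yk, pow_succ]; group

/-! ### The automorphism of `F₅` -/

abbrev F5 := FreeGroup (Fin 5)

def wN : F5 := (z 4)⁻¹ * z 3 * z 4 * (z 3)⁻¹ * (z 2)⁻¹ * (z 2)⁻¹ * (z 1)⁻¹ * z 0 * z 1 *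
          (z 2)⁻¹ * (z 1)⁻¹ * z 2 * z 3 * z 3 * z 4
def uN : F5 := z 0 * z 1 * z 1 * z 2 * (z 3)⁻¹ * (z 2)⁻¹ * z 3 * z 4 * (z 3)⁻¹ * (z 2)⁻¹ *
          (z 2)⁻¹ * (z 1)⁻¹ * z 0 * z 1 * (z 0)⁻¹

def aHom : F5 →* F5 := FreeGroup.lift ![z 1, z 2, z 3, z 4, wN]
def bHom : F5 →* F5 := FreeGroup.lift ![uN, z 0, z 1, z 2, z 3]

lemma ba : bHom.comp aHom = MonoidHom.id F5 := by
  apply FreeGroup.ext_hom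
  intro i
  fin_cases i <;> simp [aHom, bHom, wN, uN] <;> group

lemma ab : aHom.comp bHom = MonoidHom.id F5 := by
  apply FreeGroup.ext_hom
  intro i
  fin_cases i <;> simp [aHom, bHom, wN, uN] <;> group

def αAut : MulAut F5 := MonoidHom.toMulEquiv aHom bHom ba ab

lemma αAut_apply (v : F5) : αAut v = aHom v := rfl

def φ0 : Multiplicative ℤ →* MulAut F5 := zpowersHom _ αAut

lemma φ0_one : φ0 (Multiplicative.ofAdd 1) = αAut := by
  simp [φ0]

lemma α0 : αAut (z 0) = z 1 := by rw [αAut_apply]; simp [aHom]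
lemma α1 : αAut (z 1) = z 2 := by rw [αAut_apply]; simp [aHom]
lemma α2 : αAut (z 2) = z 3 := by rw [αAut_apply]; simp [aHom]
lemma α3 : αAut (z 3) = z 4 := by rw [αAut_apply]; simp [aHom]
lemma α4 : αAut (z 4) = wN := by rw [αAut_apply]; simp [aHom]

end S8
namespace S8

open SemidirectProduct Multiplicative

abbrev P := F5 ⋊[φ0] Multiplicative ℤ

def pX : P := inr (ofAdd (-1 : ℤ))
def pY : P := inl (z 0)

lemma pconj (n : F5) : pX⁻¹ * inl n * pX = inl (αAut n) := by
  have h1 : pX = inr ((ofAdd (1 : ℤ))⁻¹) := rfl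
  have h2 : pX⁻¹ = inr (ofAdd (1 : ℤ)) := by rw [h1, ← map_inv, inv_inv]
  rw [h2, h1, ← φ0_one]
  exact (inl_aut _ n).symm

lemma ykP (k : ℕ) : yk pX pY k = inl ((αAut ^ k) (z 0)) := by
  induction k with
  | zero => simp [yk, pY]
  | succ n ih =>
    rw [ykSucc, ih, pconj]
    congr 1
    rw [pow_succ', MulAut.mul_apply]

lemma αpow1 : (αAut ^ (1:ℕ)) (z 0) = z 1 := by rw [pow_one, α0]
lemma αpow2 : (αAut ^ (2:ℕ)) (z 0) = z 2 := by
  rw [pow_succ', MulAut.mul_apply, αpow1, α1]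
lemma αpow3 : (αAut ^ (3:ℕ)) (z 0) = z 3 := by
  rw [pow_succ', MulAut.mul_apply, αpow2, α2]
lemma αpow4 : (αAut ^ (4:ℕ)) (z 0) = z 4 := by
  rw [pow_succ', MulAut.mul_apply, αpow3, α3]
lemma αpow5 : (αAut ^ (5:ℕ)) (z 0) = wN := by
  rw [pow_succ', MulAut.mul_apply, αpow4, α4]

lemma ykP0 : yk pX pY 0 = inl (z 0) := by rw [ykP]; simp
lemma ykP1 : yk pX pY 1 = inl (z 1) := by rw [ykP, αpow1]
lemma ykP2 : yk pX pY 2 = inl (z 2) := by rw [ykP, αpow2]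
lemma ykP3 : yk pX pY 3 = inl (z 3) := by rw [ykP, αpow3]
lemma ykP4 : yk pX pY 4 = inl (z 4) := by rw [ykP, αpow4]

lemma keyP : yk pX pY 5 = keyRHS pX pY := by
  rw [ykP, αpow5]
  rw [keyRHS, ykP0, ykP1, ykP2, ykP3, ykP4]
  simp only [← map_inv, ← map_mul]
  rfl

lemma relP : relword pX pY = 1 := lemB pX pY keyP

end S8
namespace S8

lemma map_relword {G H : Type*} [Group G] [Group H] (f : G →* H) (a b : G) :
    f (relword a b) = relword (f a) (f b) := by
  simp only [relword, cword, commutatorElement_def, map_mul, map_inv]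

lemma map_yk {G H : Type*} [Group G] [Group H] (f : G →* H) (a b : G) (k : ℕ) :
    f (yk a b k) = yk (f a) (f b) k := by
  simp only [yk, map_mul, map_inv, map_pow]

open SemidirectProduct Multiplicative

def fgen : Fin 2 → P := ![pX, pY]

lemma hrels : ∀ r ∈ ({⁅(y⁻¹ * x * y⁻¹)⁻¹ * x * (y⁻¹ * x * y⁻¹) *
      ((y * x⁻¹ * y)⁻¹ * x * (y * x⁻¹ * y)), x⁆} : Set (FreeGroup (Fin 2))),
    FreeGroup.lift fgen r = 1 := by
  intro r hr
  rw [Set.mem_singleton_iff] at hr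
  subst hr
  show FreeGroup.lift fgen (relword x y) = 1
  rw [map_relword, show FreeGroup.lift fgen x = pX from FreeGroup.lift_apply_of,
    show FreeGroup.lift fgen y = pY from FreeGroup.lift_apply_of]
  exact relP

def fmap : GK2 →* P := PresentedGroup.toGroup hrels

def ξ : GK2 := PresentedGroup.of 0
def η : GK2 := PresentedGroup.of 1

lemma fmapξ : fmap ξ = pX := PresentedGroup.toGroup.of hrels

lemma fmapη : fmap η = pY := PresentedGroup.toGroup.of hrels

lemma relξ : relword ξ η = 1 := by
  have h1 : relword ξ η = PresentedGroup.mk _ (relword x y) :=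
    (map_relword (PresentedGroup.mk _) x y).symm
  rw [h1]
  apply (QuotientGroup.eq_one_iff _).mpr
  exact Subgroup.subset_normalClosure rfl

lemma keyξ : yk ξ η 5 = keyRHS ξ η := lemA ξ η relξ

def g1 : F5 →* GK2 := FreeGroup.lift fun i => yk ξ η (i : ℕ)

def g2 : Multiplicative ℤ →* GK2 := zpowersHom _ ξ⁻¹

lemma g1z (i : Fin 5) : g1 (z i) = yk ξ η (i : ℕ) := by
  simp [g1]

lemma g1z0 : g1 (z 0) = yk ξ η 0 := g1z 0
lemma g1z1 : g1 (z 1) = yk ξ η 1 := g1z 1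
lemma g1z2 : g1 (z 2) = yk ξ η 2 := g1z 2
lemma g1z3 : g1 (z 3) = yk ξ η 3 := g1z 3
lemma g1z4 : g1 (z 4) = yk ξ η 4 := g1z 4

lemma hstep (v : F5) : g1 (aHom v) = ξ⁻¹ * g1 v * ξ := by
  have key : g1.comp aHom = (MulAut.conj (ξ⁻¹ : GK2)).toMonoidHom.comp g1 := by
    apply FreeGroup.ext_hom
    intro i
    simp only [MonoidHom.comp_apply, MulEquiv.coe_toMonoidHom, MulAut.conj_apply, inv_inv]
    fin_cases i
    · show g1 (aHom (z 0)) = ξ⁻¹ * g1 (z 0) * ξ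
      rw [show aHom (z 0) = z 1 by simp [aHom], g1z0, g1z1,
        show (1 : ℕ) = 0 + 1 from rfl, ykSucc]
    · show g1 (aHom (z 1)) = ξ⁻¹ * g1 (z 1) * ξ
      rw [show aHom (z 1) = z 2 by simp [aHom], g1z1, g1z2,
        show (2 : ℕ) = 1 + 1 from rfl, ykSucc]
    · show g1 (aHom (z 2)) = ξ⁻¹ * g1 (z 2) * ξ
      rw [show aHom (z 2) = z 3 by simp [aHom], g1z2, g1z3,
        show (3 : ℕ) = 2 + 1 from rfl, ykSucc]
    · show g1 (aHom (z 3)) = ξ⁻¹ * g1 (z 3) * ξ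
      rw [show aHom (z 3) = z 4 by simp [aHom], g1z3, g1z4,
        show (4 : ℕ) = 3 + 1 from rfl, ykSucc]
    · show g1 (aHom (z 4)) = ξ⁻¹ * g1 (z 4) * ξ
      rw [show aHom (z 4) = wN by simp [aHom]]
      have h5 : g1 wN = yk ξ η 5 := by
        rw [keyξ]
        simp only [wN, map_mul, map_inv, g1z0, g1z1, g1z2, g1z3, g1z4, keyRHS]
      rw [h5, g1z4, show (5 : ℕ) = 4 + 1 from rfl, ykSucc]
  have := DFunLike.congr_fun key v
  simpa using this

lemma hstep' (v : F5) : g1 (αAut⁻¹ v) = ξ * g1 v * ξ⁻¹ := by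
  have h := hstep (αAut⁻¹ v)
  rw [show aHom (αAut⁻¹ v) = v from MulAut.apply_inv_self F5 αAut v] at h
  rw [h]
  group

lemma hzpow : ∀ (k : ℤ) (v : F5), g1 ((αAut ^ k) v) = ξ⁻¹ ^ k * g1 v * (ξ⁻¹ ^ k)⁻¹ := by
  intro k
  induction k using Int.induction_on with
  | zero => intro v; simp
  | succ n ih =>
    intro v
    have h' : (αAut ^ ((n : ℤ) + 1)) v = (αAut ^ (n : ℤ)) (αAut v) := by
      rw [zpow_add_one]; rfl
    rw [h', ih (αAut v), show g1 (αAut v) = ξ⁻¹ * g1 v * ξ from hstep v, zpow_add_one]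
    group
  | pred n ih =>
    intro v
    have h' : (αAut ^ (-(n : ℤ) - 1)) v = (αAut ^ (-(n : ℤ))) (αAut⁻¹ v) := by
      rw [zpow_sub_one]; rfl
    rw [h', ih (αAut⁻¹ v), hstep' v, zpow_sub_one]
    group

lemma hcompat : ∀ g : Multiplicative ℤ,
    g1.comp (φ0 g).toMonoidHom = (MulAut.conj (g2 g)).toMonoidHom.comp g1 := by
  intro g
  apply MonoidHom.ext
  intro v
  simp only [MonoidHom.comp_apply, MulEquiv.coe_toMonoidHom, MulAut.conj_apply,
    g2, zpowersHom_apply, φ0]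
  rw [hzpow (toAdd g) v]

def gmap : P →* GK2 := SemidirectProduct.lift g1 g2 hcompat

lemma gf : gmap.comp fmap = MonoidHom.id GK2 := by
  apply PresentedGroup.ext
  intro i
  fin_cases i
  · show gmap (fmap ξ) = ξ
    rw [fmapξ]
    show gmap (inr (ofAdd (-1 : ℤ))) = ξ
    rw [gmap, SemidirectProduct.lift_inr]
    simp [g2]
  · show gmap (fmap η) = η
    rw [fmapη]
    show gmap (inl (z 0)) = η
    rw [gmap, SemidirectProduct.lift_inl, g1z]
    simp [yk]

lemma fg : fmap.comp gmap = MonoidHom.id P := by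
  apply SemidirectProduct.hom_ext
  · apply FreeGroup.ext_hom
    intro i
    simp only [MonoidHom.comp_apply, MonoidHom.id_apply]
    rw [show SemidirectProduct.inl (FreeGroup.of i) = (inl (z i) : P) from rfl]
    rw [gmap, SemidirectProduct.lift_inl, g1z, map_yk, fmapξ, fmapη]
    fin_cases i
    · exact ykP0
    · exact ykP1
    · exact ykP2
    · exact ykP3
    · exact ykP4
  · apply MonoidHom.ext_mint
    simp only [MonoidHom.comp_apply, MonoidHom.id_apply]
    rw [gmap, SemidirectProduct.lift_inr]
    have h2 : g2 (ofAdd (1 : ℤ)) = ξ⁻¹ := by simp [g2]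
    rw [h2, map_inv, fmapξ]
    show pX⁻¹ = inr (ofAdd (1 : ℤ))
    rw [show pX = inr ((ofAdd (1 : ℤ))⁻¹) from rfl, ← map_inv, inv_inv]

def isoGK2 : GK2 ≃* P := MonoidHom.toMulEquiv fmap gmap gf fg

end S8

/-- `G(K₂) ≅ F₅ ⋊ ℤ`, where the generator of `ℤ` acts on the free group `F₅` on
`y₀, …, y₄` by `yᵢ ↦ y_{i+1}` for `0 ≤ i ≤ 3` and
`y₄ ↦ y₄⁻¹y₃y₄y₃⁻¹y₂⁻²y₁⁻¹y₀y₁y₂⁻¹y₁⁻¹y₂y₃²y₄`. -/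
theorem stmt8 :
    ∃ φ : Multiplicative ℤ →* MulAut (FreeGroup (Fin 5)),
      (∀ i : Fin 4, φ (Multiplicative.ofAdd 1) (z i.castSucc) = z i.succ) ∧
      φ (Multiplicative.ofAdd 1) (z 4) =
        (z 4)⁻¹ * z 3 * z 4 * (z 3)⁻¹ * (z 2)⁻¹ * (z 2)⁻¹ * (z 1)⁻¹ * z 0 * z 1 *
          (z 2)⁻¹ * (z 1)⁻¹ * z 2 * z 3 * z 3 * z 4 ∧
      Nonempty (GK2 ≃* (FreeGroup (Fin 5) ⋊[φ] Multiplicative ℤ)) := by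
  refine ⟨S8.φ0, ?_, ?_, ⟨S8.isoGK2⟩⟩
  · intro i
    rw [S8.φ0_one]
    fin_cases i
    · exact S8.α0
    · exact S8.α1
    · exact S8.α2
    · exact S8.α3
  · rw [S8.φ0_one]
    exact S8.α4
end

section
/- Let α be the endomorphism of A = ℤ⁵ with basis e₀,...,e₄ given by eᵢ ↦ e_{i+1} for 0 ≤ i ≤ 3 and e₄ ↦ e₀ − e₁ − 2e₂ + 2e₃ + e₄. Let v₁ = e₀+2e₁+e₂, v₂ = −e₀−e₁+e₂+e₃, v₃ = e₀−2e₂+e₄, w₁ = −e₀+3e₁−3e₂+e₃, w₂ = −e₀+2e₁−2e₃+e₄. Then ker(α−id)³ is the subgroup generated by v₁,v₂,v₃ and ker(α+id)² is the subgroup generated by w₁,w₂; moreover α(v₁)=v₁+v₂, α(v₂)=v₂+v₃, α(v₃)=v₃, α(w₁)=−w₁+w₂, α(w₂)=−w₂. -/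
private abbrev v₁ : Fin 5 → ℤ := ![1, 2, 1, 0, 0]
private abbrev v₂ : Fin 5 → ℤ := ![-1, -1, 1, 1, 0]
private abbrev v₃ : Fin 5 → ℤ := ![1, 0, -2, 0, 1]
private abbrev w₁ : Fin 5 → ℤ := ![-1, 3, -3, 1, 0]
private abbrev w₂ : Fin 5 → ℤ := ![-1, 2, 0, -2, 1]

set_option maxHeartbeats 1600000 in
/-- For the endomorphism `α` of `ℤ⁵` with `eᵢ ↦ e_{i+1}` (`0 ≤ i ≤ 3`) and
`e₄ ↦ e₀ − e₁ − 2e₂ + 2e₃ + e₄`: `ker(α−id)³ = ⟨v₁,v₂,v₃⟩`, `ker(α+id)² = ⟨w₁,w₂⟩`, and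
`α(v₁)=v₁+v₂`, `α(v₂)=v₂+v₃`, `α(v₃)=v₃`, `α(w₁)=−w₁+w₂`, `α(w₂)=−w₂`. -/
theorem stmt10 (α : Module.End ℤ (Fin 5 → ℤ))
    (hα : ∀ i : Fin 4, α (Pi.single i.castSucc 1) = Pi.single i.succ 1)
    (hα4 : α (Pi.single 4 1) = ![1, -1, -2, 2, 1]) :
    LinearMap.ker ((α - 1) ^ 3) = Submodule.span ℤ {v₁, v₂, v₃} ∧
    LinearMap.ker ((α + 1) ^ 2) = Submodule.span ℤ {w₁, w₂} ∧
    α v₁ = v₁ + v₂ ∧ α v₂ = v₂ + v₃ ∧ α v₃ = v₃ ∧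
    α w₁ = -w₁ + w₂ ∧ α w₂ = -w₂ := by
  have h0 := hα 0
  have h1 := hα 1
  have h2 := hα 2
  have h3 := hα 3
  have c0 : ((0 : Fin 4).castSucc) = (0 : Fin 5) := by decide
  have c1 : ((1 : Fin 4).castSucc) = (1 : Fin 5) := by decide
  have c2 : ((2 : Fin 4).castSucc) = (2 : Fin 5) := by decide
  have c3 : ((3 : Fin 4).castSucc) = (3 : Fin 5) := by decide
  have s0 : ((0 : Fin 4).succ) = (1 : Fin 5) := by decide
  have s1 : ((1 : Fin 4).succ) = (2 : Fin 5) := by decide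
  have s2 : ((2 : Fin 4).succ) = (3 : Fin 5) := by decide
  have s3 : ((3 : Fin 4).succ) = (4 : Fin 5) := by decide
  rw [c0, s0] at h0
  rw [c1, s1] at h1
  rw [c2, s2] at h2
  rw [c3, s3] at h3
  -- formula for α on any vector
  have hαx : ∀ x : Fin 5 → ℤ,
      α x = ![x 4, x 0 - x 4, x 1 - 2 * x 4, x 2 + 2 * x 4, x 3 + x 4] := by
    intro x
    calc α x = α (∑ i : Fin 5, Pi.single i (x i)) := by
            rw [Finset.univ_sum_single]
      _ = ∑ i : Fin 5, x i • α (Pi.single i (1 : ℤ)) := by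
          rw [map_sum]
          refine Finset.sum_congr rfl fun i _ => ?_
          rw [← map_smul, ← Pi.single_smul, smul_eq_mul, mul_one]
      _ = _ := by
          rw [Fin.sum_univ_five, h0, h1, h2, h3, hα4]
          funext j
          fin_cases j <;>
            simp [Pi.single_apply] <;> ring
  have hβ : ∀ x : Fin 5 → ℤ, (α - 1) x =
      ![x 4 - x 0, x 0 - x 4 - x 1, x 1 - 2 * x 4 - x 2, x 2 + 2 * x 4 - x 3, x 3] := by
    intro x
    have : (α - 1) x = α x - x := rfl
    rw [this, hαx]
    funext j
    fin_cases j <;> simp <;> ring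
  have hβ3 : ∀ x : Fin 5 → ℤ, (((α - 1) ^ 3 : Module.End ℤ (Fin 5 → ℤ))) x =
      ![-x 0 + x 2 - 2 * x 3 + 3 * x 4,
        3 * x 0 - x 1 - x 2 + 3 * x 3 - 5 * x 4,
        -3 * x 0 + 3 * x 1 - 3 * x 2 + 3 * x 3 - 3 * x 4,
        x 0 - 3 * x 1 + 5 * x 2 - 7 * x 3 + 9 * x 4,
        x 1 - 2 * x 2 + 3 * x 3 - 4 * x 4] := by
    intro x
    have : (((α - 1) ^ 3 : Module.End ℤ (Fin 5 → ℤ))) x = (α - 1) ((α - 1) ((α - 1) x)) := by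
      simp only [pow_succ, pow_zero, pow_one, Module.End.mul_apply, Module.End.one_apply]
    rw [this, hβ, hβ, hβ]
    funext j
    fin_cases j <;> simp <;> ring
  have hγ : ∀ x : Fin 5 → ℤ, (α + 1) x =
      ![x 4 + x 0, x 0 - x 4 + x 1, x 1 - 2 * x 4 + x 2, x 2 + 2 * x 4 + x 3,
        x 3 + 2 * x 4] := by
    intro x
    have : (α + 1) x = α x + x := rfl
    rw [this, hαx]
    funext j
    fin_cases j <;> simp <;> ring
  have hγ2 : ∀ x : Fin 5 → ℤ, (((α + 1) ^ 2 : Module.End ℤ (Fin 5 → ℤ))) x =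
      ![x 0 + x 3 + 3 * x 4,
        2 * x 0 + x 1 - x 3 - 2 * x 4,
        x 0 + 2 * x 1 + x 2 - 2 * x 3 - 7 * x 4,
        x 1 + 2 * x 2 + 3 * x 3 + 4 * x 4,
        x 2 + 3 * x 3 + 6 * x 4] := by
    intro x
    have : (((α + 1) ^ 2 : Module.End ℤ (Fin 5 → ℤ))) x = (α + 1) ((α + 1) x) := by
      simp only [pow_succ, pow_zero, pow_one, Module.End.mul_apply, Module.End.one_apply]
    rw [this, hγ, hγ]
    funext j
    fin_cases j <;> simp <;> ring
  refine ⟨?_, ?_, ?_, ?_, ?_, ?_, ?_⟩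
  · -- ker (α-1)^3 = span {v₁, v₂, v₃}
    apply le_antisymm
    · intro x hx
      rw [LinearMap.mem_ker, hβ3] at hx
      have e0 := congrFun hx 0
      have e1 := congrFun hx 1
      have e2 := congrFun hx 2
      have e3 := congrFun hx 3
      have e4 := congrFun hx 4
      simp only [Matrix.cons_val_zero, Matrix.cons_val_one, Matrix.head_cons,
        Matrix.cons_val_two, Matrix.tail_cons, Matrix.cons_val_three,
        Matrix.cons_val_four, Pi.zero_apply] at e0 e1 e2 e3 e4
      have hxe : x = (x 2 - x 3 + 2 * x 4) • v₁ + (x 3) • v₂ + (x 4) • v₃ := by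
        funext j
        fin_cases j <;> simp <;> linarith [e0, e1, e2, e3, e4]
      rw [hxe]
      refine Submodule.add_mem _ (Submodule.add_mem _ ?_ ?_) ?_
      · exact Submodule.smul_mem _ _ (Submodule.subset_span (by simp))
      · exact Submodule.smul_mem _ _ (Submodule.subset_span (by simp))
      · exact Submodule.smul_mem _ _ (Submodule.subset_span (by simp))
    · rw [Submodule.span_le]
      rintro y (rfl | rfl | rfl) <;>
        · rw [SetLike.mem_coe, LinearMap.mem_ker, hβ3]
          funext j
          fin_cases j <;> simp
  · -- ker (α+1)^2 = span {w₁, w₂}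
    apply le_antisymm
    · intro x hx
      rw [LinearMap.mem_ker, hγ2] at hx
      have e0 := congrFun hx 0
      have e1 := congrFun hx 1
      have e2 := congrFun hx 2
      have e3 := congrFun hx 3
      have e4 := congrFun hx 4
      simp only [Matrix.cons_val_zero, Matrix.cons_val_one, Matrix.head_cons,
        Matrix.cons_val_two, Matrix.tail_cons, Matrix.cons_val_three,
        Matrix.cons_val_four, Pi.zero_apply] at e0 e1 e2 e3 e4
      have hxe : x = (x 3 + 2 * x 4) • w₁ + (x 4) • w₂ := by
        funext j
        fin_cases j <;> simp <;> linarith [e0, e1, e2, e3, e4]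
      rw [hxe]
      refine Submodule.add_mem _ ?_ ?_
      · exact Submodule.smul_mem _ _ (Submodule.subset_span (by simp))
      · exact Submodule.smul_mem _ _ (Submodule.subset_span (by simp))
    · rw [Submodule.span_le]
      rintro y (rfl | rfl) <;>
        · rw [SetLike.mem_coe, LinearMap.mem_ker, hγ2]
          funext j
          fin_cases j <;> simp
  · rw [hαx]; funext j; fin_cases j <;> simp
  · rw [hαx]; funext j; fin_cases j <;> simp
  · rw [hαx]; funext j; fin_cases j <;> simp
  · rw [hαx]
    funext j
    fin_cases j <;> simp [Pi.neg_apply, Pi.add_apply]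
  · rw [hαx]
    funext j
    fin_cases j <;> simp [Pi.neg_apply]
end

section
/- With α and A = ℤ⁵ as above, let A₀ = V + W where V = ⟨v₁,v₂,v₃⟩ and W = ⟨w₁,w₂⟩. Then the quotient A/A₀ is isomorphic to ℤ/4 ⊕ ℤ/16, generated by the images of t₀ = e₀ + 3e₁ and t₁ = e₁ respectively. -/
/-- The subgroup `A₀ = V + W` of `ℤ⁵` generated by `v₁, v₂, v₃, w₁, w₂`. -/
def A₀ : Submodule ℤ (Fin 5 → ℤ) := Submodule.span ℤ {v₁, v₂, v₃, w₁, w₂}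

private abbrev t₀ : Fin 5 → ℤ := ![1, 3, 0, 0, 0]
private abbrev t₁ : Fin 5 → ℤ := ![0, 1, 0, 0, 0]

/-- The projection `ℤ⁵ → ℤ/4 × ℤ/16`. -/
private def f : (Fin 5 → ℤ) →ₗ[ℤ] ZMod 4 × ZMod 16 where
  toFun x := (((x 0 + 3 * x 2 + 2 * x 3 + x 4 : ℤ) : ZMod 4),
    ((13 * x 0 + x 1 + x 2 + 13 * x 3 + 5 * x 4 : ℤ) : ZMod 16))
  map_add' x y := by
    simp only [Pi.add_apply, Prod.mk_add_mk, Prod.mk.injEq]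
    constructor <;> push_cast <;> ring
  map_smul' c x := by
    simp only [Pi.smul_apply, smul_eq_mul, RingHom.id_apply, Prod.smul_mk, zsmul_eq_mul,
      Prod.mk.injEq]
    constructor <;> push_cast <;> ring

private lemma hmem (x : Fin 5 → ℤ) :
    x - ((x 0 + 3 * x 2 + 2 * x 3 + x 4) • t₀
        + (13 * x 0 + x 1 + x 2 + 13 * x 3 + 5 * x 4) • t₁) ∈ A₀ := by
  have hv₁ : v₁ ∈ A₀ := Submodule.subset_span (by simp)
  have hv₂ : v₂ ∈ A₀ := Submodule.subset_span (by simp)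
  have hv₃ : v₃ ∈ A₀ := Submodule.subset_span (by simp)
  have hw₁ : w₁ ∈ A₀ := Submodule.subset_span (by simp)
  have hw₂ : w₂ ∈ A₀ := Submodule.subset_span (by simp)
  have key : x - ((x 0 + 3 * x 2 + 2 * x 3 + x 4) • t₀
        + (13 * x 0 + x 1 + x 2 + 13 * x 3 + 5 * x 4) • t₁)
      = (-4 * x 0 - 3 * x 2 - 5 * x 3 - 2 * x 4) • v₁ + (x 2 + x 3 + x 4) • v₂
        + (x 0 + x 3 + x 4) • v₃ + (-2 * x 0 - x 2 - 2 * x 3 - x 4) • w₁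
        + (- x 0 - x 3) • w₂ := by
    funext i
    fin_cases i <;>
      simp [Matrix.cons_val_zero, Matrix.cons_val_one, Matrix.head_cons, Fin.isValue] <;> ring
  rw [key]
  exact Submodule.add_mem _ (Submodule.add_mem _ (Submodule.add_mem _ (Submodule.add_mem _
    (Submodule.smul_mem _ _ hv₁) (Submodule.smul_mem _ _ hv₂)) (Submodule.smul_mem _ _ hv₃))
    (Submodule.smul_mem _ _ hw₁)) (Submodule.smul_mem _ _ hw₂)

private lemma hker : A₀ ≤ LinearMap.ker f := by
  rw [A₀, Submodule.span_le]
  rintro y hy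
  simp only [Set.mem_insert_iff, Set.mem_singleton_iff] at hy
  rcases hy with rfl | rfl | rfl | rfl | rfl <;>
    · apply LinearMap.mem_ker.mpr
      decide

/-- `A/A₀ ≅ ℤ/4 ⊕ ℤ/16`, generated by the images of `t₀ = e₀ + 3e₁` and
`t₁ = e₁` respectively. -/
theorem stmt11 :
    ∃ e : ((Fin 5 → ℤ) ⧸ A₀) ≃+ ZMod 4 × ZMod 16,
      e (Submodule.Quotient.mk ![1, 3, 0, 0, 0]) = (1, 0) ∧
      e (Submodule.Quotient.mk ![0, 1, 0, 0, 0]) = (0, 1) := by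
  set Q := (Fin 5 → ℤ) ⧸ A₀
  let fq : Q →ₗ[ℤ] ZMod 4 × ZMod 16 := A₀.liftQ f hker
  have h4 : (zmultiplesHom Q (Submodule.Quotient.mk t₀)) (4 : ℤ) = 0 := by
    show (4 : ℤ) • (Submodule.Quotient.mk t₀ : Q) = 0
    rw [← Submodule.Quotient.mk_smul, Submodule.Quotient.mk_eq_zero]
    have : (4 : ℤ) • t₀ = (4 : ℤ) • v₁ + (-1 : ℤ) • v₂ + (1 : ℤ) • w₁ := by
      funext i; fin_cases i <;> simp <;> ring
    rw [this]
    exact Submodule.add_mem _ (Submodule.add_mem _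
      (Submodule.smul_mem _ _ (Submodule.subset_span (by simp)))
      (Submodule.smul_mem _ _ (Submodule.subset_span (by simp))))
      (Submodule.smul_mem _ _ (Submodule.subset_span (by simp)))
  have h16 : (zmultiplesHom Q (Submodule.Quotient.mk t₁)) (16 : ℤ) = 0 := by
    show (16 : ℤ) • (Submodule.Quotient.mk t₁ : Q) = 0
    rw [← Submodule.Quotient.mk_smul, Submodule.Quotient.mk_eq_zero]
    have : (16 : ℤ) • t₁ = (4 : ℤ) • v₁ + (-1 : ℤ) • v₃ + (2 : ℤ) • w₁ + (1 : ℤ) • w₂ := by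
      funext i; fin_cases i <;> simp <;> ring
    rw [this]
    exact Submodule.add_mem _ (Submodule.add_mem _ (Submodule.add_mem _
      (Submodule.smul_mem _ _ (Submodule.subset_span (by simp)))
      (Submodule.smul_mem _ _ (Submodule.subset_span (by simp))))
      (Submodule.smul_mem _ _ (Submodule.subset_span (by simp))))
      (Submodule.smul_mem _ _ (Submodule.subset_span (by simp)))
  let g₁ : ZMod 4 →+ Q := ZMod.lift 4 ⟨zmultiplesHom Q (Submodule.Quotient.mk t₀), h4⟩
  let g₂ : ZMod 16 →+ Q := ZMod.lift 16 ⟨zmultiplesHom Q (Submodule.Quotient.mk t₁), h16⟩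
  let g : ZMod 4 × ZMod 16 →+ Q := g₁.coprod g₂
  have hg₁ : ∀ m : ℤ, g₁ (m : ZMod 4) = m • (Submodule.Quotient.mk t₀ : Q) := fun m =>
    ZMod.lift_coe 4 _ m
  have hg₂ : ∀ m : ℤ, g₂ (m : ZMod 16) = m • (Submodule.Quotient.mk t₁ : Q) := fun m =>
    ZMod.lift_coe 16 _ m
  have hfq : ∀ x : Fin 5 → ℤ, fq (Submodule.Quotient.mk x)
      = (((x 0 + 3 * x 2 + 2 * x 3 + x 4 : ℤ) : ZMod 4),
        ((13 * x 0 + x 1 + x 2 + 13 * x 3 + 5 * x 4 : ℤ) : ZMod 16)) := fun x => rfl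
  have left : Function.LeftInverse g fq := by
    intro q
    obtain ⟨x, rfl⟩ := Submodule.Quotient.mk_surjective A₀ q
    rw [hfq]
    show g₁ _ + g₂ _ = _
    simp only [AddMonoidHom.coe_fst, AddMonoidHom.coe_snd]
    rw [hg₁, hg₂]
    rw [← Submodule.Quotient.mk_smul, ← Submodule.Quotient.mk_smul,
      ← Submodule.Quotient.mk_add]
    exact ((Submodule.Quotient.eq A₀).2 (hmem x)).symm
  have right : Function.RightInverse g fq := by
    rintro ⟨a, b⟩
    obtain ⟨m, rfl⟩ := ZMod.intCast_surjective a
    obtain ⟨k, rfl⟩ := ZMod.intCast_surjective b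
    show fq (g₁ _ + g₂ _) = _
    simp only [AddMonoidHom.coe_fst, AddMonoidHom.coe_snd]
    rw [hg₁, hg₂, map_add, map_smul, map_smul, hfq, hfq]
    show m • ((((1 : ℤ)) : ZMod 4), (((16 : ℤ)) : ZMod 16))
        + k • ((((0 : ℤ)) : ZMod 4), (((1 : ℤ)) : ZMod 16)) = _
    simp only [Prod.smul_mk, Prod.mk_add_mk, Prod.mk.injEq, zsmul_eq_mul]
    have h160 : (16 : ZMod 16) = 0 := by decide
    constructor
    · push_cast; ring
    · push_cast; rw [h160]; ring
  refine ⟨AddEquiv.mk' ⟨fq, g, left, right⟩ (map_add fq), ?_, ?_⟩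
  · show fq (Submodule.Quotient.mk ![1, 3, 0, 0, 0]) = (1, 0)
    rw [hfq]; decide
  · show fq (Submodule.Quotient.mk ![0, 1, 0, 0, 0]) = (0, 1)
    rw [hfq]; decide
end
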